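/- Let k and l be positive integers. Then ∫_{(S¹)³} e(θ₀,θ₁,θ₂) cos(kθ₁) cos(lθ₂) dθ₀dθ₁dθ₂ = 0 and ∫_{(S¹)³} e(θ₀,θ₁,θ₂) sin(kθ₁) sin(lθ₂) dθ₀dθ₁dθ₂ = 0; moreover, if k ≠ l, then also ∫_{(S¹)³} e(θ₀,θ₁,θ₂) cos(kθ₁) sin(lθ₂) dθ₀dθ₁dθ₂ = 0. -/

import Mathlib

open MeasureTheory Real
open scoped Real

noncomputable section

instance : Fact (0 < 2 * π) := ⟨by positivity⟩

/-- The circle `S¹ = ℝ/2πℤ`. -/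
abbrev Circle2pi := AddCircle (2 * π)

/-- The orientation cocycle `e` on the circle: `1` on strictly positively
cyclically ordered triples, `-1` otherwise. -/
def eCocycle (a b c : Circle2pi) : ℝ :=
  letI := Classical.dec (sbtw a b c)
  if sbtw a b c then 1 else -1

/-- The normalized Haar probability measure on the circle. -/
abbrev circleMeasure : Measure Circle2pi := AddCircle.haarAddCircle

/-- The `n`-torus `𝕋ⁿ`. -/
abbrev Torus (n : ℕ) := Fin n → Circle2pi

/-- The product probability measure on the `n`-torus. -/
abbrev torusMeasure (n : ℕ) : Measure (Torus n) := Measure.pi fun _ => circleMeasure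

/-- The cocycle `C` on `(𝕋ⁿ)^(2n+1)` (indices `0, …, 2n`; the `i`-th Euler class,
for `i = 0, …, n-1` (0-indexed), uses positions `2i, 2i+1, 2i+2`). -/
def Ccocycle (n : ℕ) (θ : Fin (2 * n + 1) → Torus n) : ℝ :=
  (1 / (2 * n + 1).factorial : ℝ) *
    ∑ σ : Equiv.Perm (Fin (2 * n + 1)), ((Equiv.Perm.sign σ : ℤ) : ℝ) *
      ∏ i : Fin n,
        eCocycle (θ (σ ⟨2 * i.1, by have := i.2; omega⟩) i)
          (θ (σ ⟨2 * i.1 + 1, by have := i.2; omega⟩) i)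
          (θ (σ ⟨2 * i.1 + 2, by have := i.2; omega⟩) i)

def cmk : ℝ → Circle2pi := QuotientAddGroup.mk

lemma twoPiPos : (0:ℝ) < 2 * π := by positivity

lemma cmk_surj (θ : Circle2pi) : ∃ x : ℝ, cmk x = θ := ⟨θ.out, Quotient.out_eq' θ⟩

lemma btw_cmk (x y z : ℝ) : btw (cmk x) (cmk y) (cmk z) ↔
    toIcoMod twoPiPos 0 (y - x) ≤ toIocMod twoPiPos 0 (z - x) :=
  QuotientAddGroup.btw_coe_iff'

lemma btw_translate (a b c t : Circle2pi) : btw (a + t) (b + t) (c + t) ↔ btw a b c := by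
  obtain ⟨x, rfl⟩ := cmk_surj a
  obtain ⟨y, rfl⟩ := cmk_surj b
  obtain ⟨z, rfl⟩ := cmk_surj c
  obtain ⟨u, rfl⟩ := cmk_surj t
  rw [show (cmk x + cmk u) = cmk (x + u) from rfl, show (cmk y + cmk u) = cmk (y + u) from rfl,
    show (cmk z + cmk u) = cmk (z + u) from rfl, btw_cmk, btw_cmk]
  norm_num

lemma btw_neg' (a b c : Circle2pi) : btw (-a) (-b) (-c) ↔ btw a c b := by
  obtain ⟨x, rfl⟩ := cmk_surj a
  obtain ⟨y, rfl⟩ := cmk_surj b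
  obtain ⟨z, rfl⟩ := cmk_surj c
  rw [show (-cmk x) = cmk (-x) from rfl, show (-cmk y) = cmk (-y) from rfl,
    show (-cmk z) = cmk (-z) from rfl, btw_cmk, btw_cmk]
  rw [show -y - -x = -(y - x) by ring, show -z - -x = -(z - x) by ring,
    toIcoMod_neg, toIocMod_neg, neg_zero]
  constructor <;> intro h <;> linarith

lemma sbtw_translate (a b c t : Circle2pi) : sbtw (a + t) (b + t) (c + t) ↔ sbtw a b c := by
  rw [sbtw_iff_btw_not_btw, sbtw_iff_btw_not_btw, btw_translate, btw_translate]

lemma sbtw_neg' (a b c : Circle2pi) : sbtw (-a) (-b) (-c) ↔ sbtw a c b := by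
  rw [sbtw_iff_btw_not_btw, sbtw_iff_btw_not_btw, btw_neg', btw_neg']
  constructor
  · rintro ⟨h1, h2⟩
    exact ⟨h1, fun hb => h2 (btw_cyclic_left hb)⟩
  · rintro ⟨h1, h2⟩
    exact ⟨h1, fun hb => h2 (btw_cyclic_right hb)⟩

lemma sbtw_swap_of_ne {a b c : Circle2pi} (hab : a ≠ b) (hbc : b ≠ c) (hac : a ≠ c) :
    sbtw a c b ↔ ¬ sbtw a b c := by
  rw [sbtw_iff_btw_not_btw, sbtw_iff_btw_not_btw]
  constructor
  · rintro ⟨h1, h2⟩ ⟨h3, h4⟩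
    exact h4 (btw_cyclic_left h1)
  · intro h
    rcases btw_total a b c with hb | hb
    · have hcba : btw c b a := by
        by_contra hn
        exact h ⟨hb, hn⟩
      rcases btw_antisymm hb hcba with h' | h' | h'
      · exact absurd h' hab
      · exact absurd h' hbc
      · exact absurd h'.symm hac
    · refine ⟨btw_cyclic_right hb, fun hb2 => ?_⟩
      have habc : btw a b c := btw_cyclic_right hb2
      rcases btw_antisymm habc hb with h' | h' | h'
      · exact absurd h' hab
      · exact absurd h' hbc
      · exact absurd h'.symm hac

lemma eCocycle_translate (a b c t : Circle2pi) :
    eCocycle (a + t) (b + t) (c + t) = eCocycle a b c := by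
  unfold eCocycle
  by_cases h : sbtw a b c
  · rw [if_pos h, if_pos ((sbtw_translate a b c t).mpr h)]
  · rw [if_neg h, if_neg (fun h' => h ((sbtw_translate a b c t).mp h'))]

lemma eCocycle_neg {a b c : Circle2pi} (hab : a ≠ b) (hbc : b ≠ c) (hac : a ≠ c) :
    eCocycle (-a) (-b) (-c) = - eCocycle a b c := by
  unfold eCocycle
  by_cases h : sbtw a b c
  · have h' : ¬ sbtw (-a) (-b) (-c) := by
      rw [sbtw_neg', sbtw_swap_of_ne hab hbc hac]
      exact fun h2 => h2 h
    rw [if_pos h, if_neg h']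
  · have h' : sbtw (-a) (-b) (-c) := by
      rw [sbtw_neg']
      exact (sbtw_swap_of_ne hab hbc hac).mpr h
    rw [if_neg h, if_pos h']
    norm_num

abbrev S3 := Circle2pi × Circle2pi × Circle2pi
abbrev MM : Measure S3 := circleMeasure.prod (circleMeasure.prod circleMeasure)

lemma btw_def (x y z : Circle2pi) : btw x y z ↔
    ((AddCircle.equivIco (2*π) 0 (y - x) : ℝ) ≤ (AddCircle.equivIoc (2*π) 0 (z - x) : ℝ)) :=
  Iff.rfl

lemma measurable_ico : Measurable fun x : Circle2pi => ((AddCircle.equivIco (2*π) 0 x : ℝ)) :=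
  measurable_subtype_coe.comp (AddCircle.measurableEquivIco (2*π) 0).measurable

lemma measurable_ioc : Measurable fun x : Circle2pi => ((AddCircle.equivIoc (2*π) 0 x : ℝ)) :=
  measurable_subtype_coe.comp (AddCircle.measurableEquivIoc (2*π) 0).measurable

lemma measurableSet_btw3 {α : Type*} [MeasurableSpace α] {f g h : α → Circle2pi}
    (hf : Measurable f) (hg : Measurable g) (hh : Measurable h) :
    MeasurableSet {x | btw (f x) (g x) (h x)} := by
  have : {x | btw (f x) (g x) (h x)} =
      {x | (AddCircle.equivIco (2*π) 0 (g x - f x) : ℝ) ≤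
        (AddCircle.equivIoc (2*π) 0 (h x - f x) : ℝ)} := rfl
  rw [this]
  exact measurableSet_le (measurable_ico.comp (hg.sub hf)) (measurable_ioc.comp (hh.sub hf))

lemma measurableSet_sbtw3 {α : Type*} [MeasurableSpace α] {f g h : α → Circle2pi}
    (hf : Measurable f) (hg : Measurable g) (hh : Measurable h) :
    MeasurableSet {x | sbtw (f x) (g x) (h x)} := by
  have : {x | sbtw (f x) (g x) (h x)} =
      {x | btw (f x) (g x) (h x)} ∩ {x | btw (h x) (g x) (f x)}ᶜ := by
    ext x
    simp only [Set.mem_inter_iff, Set.mem_setOf_eq, Set.mem_compl_iff]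
    exact sbtw_iff_btw_not_btw
  rw [this]
  exact (measurableSet_btw3 hf hg hh).inter (measurableSet_btw3 hh hg hf).compl

open Classical in
lemma measurable_eCocycle3 {α : Type*} [MeasurableSpace α] {f g h : α → Circle2pi}
    (hf : Measurable f) (hg : Measurable g) (hh : Measurable h) :
    Measurable fun x => eCocycle (f x) (g x) (h x) := by
  have : (fun x => eCocycle (f x) (g x) (h x)) =
      ({x | sbtw (f x) (g x) (h x)}).piecewise (fun _ => (1:ℝ)) (fun _ => -1) := by
    funext x
    by_cases hx : sbtw (f x) (g x) (h x) <;> simp [eCocycle, Set.piecewise, hx]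
  rw [this]
  exact Measurable.piecewise (measurableSet_sbtw3 hf hg hh) measurable_const measurable_const

lemma abs_eCocycle_le (a b c : Circle2pi) : |eCocycle a b c| ≤ 1 := by
  unfold eCocycle
  split <;> norm_num

lemma circle_singleton_null (x : Circle2pi) : circleMeasure {x} = 0 := by
  have hvol : (volume : Measure Circle2pi) {x} = 0 := by
    have hU : MeasurableSet ({x} : Set Circle2pi) := measurableSet_singleton x
    rw [AddCircle.add_projection_respects_measure (2*π) 0 hU]
    refine measure_mono_null (Set.inter_subset_left.trans (subset_refl _)) ?_
    obtain ⟨y, rfl⟩ := cmk_surj x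
    have hc : (QuotientAddGroup.mk ⁻¹' ({cmk y} : Set Circle2pi) : Set ℝ) ⊆
        Set.range (fun n : ℤ => y + n • (2*π)) := by
      intro z hz
      have hz' : (QuotientAddGroup.mk z : Circle2pi) = cmk y := hz
      have : z - y ∈ AddSubgroup.zmultiples (2*π) := by
        rw [← QuotientAddGroup.eq_iff_sub_mem]
        exact hz'
      obtain ⟨n, hn⟩ := AddSubgroup.mem_zmultiples_iff.mp this
      exact ⟨n, show y + n • (2*π) = z by linarith [hn]⟩
    exact Set.Countable.measure_zero ((Set.countable_range _).mono hc) _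
  have := AddCircle.volume_eq_smul_haarAddCircle (T := 2*π)
  rw [this] at hvol
  simp only [Measure.smul_apply, smul_eq_mul, mul_eq_zero] at hvol
  rcases hvol with h | h
  · exact absurd h (by simp [ENNReal.ofReal_eq_zero]; positivity)
  · exact h

lemma ae_distinct : ∀ᵐ p : S3 ∂MM, p.1 ≠ p.2.1 ∧ p.2.1 ≠ p.2.2 ∧ p.1 ≠ p.2.2 := by
  have h1 : MM {p : S3 | p.1 = p.2.1} = 0 := by
    have hs : MeasurableSet {p : S3 | p.1 = p.2.1} :=
      measurableSet_eq_fun measurable_fst (measurable_fst.comp measurable_snd)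
    rw [Measure.prod_apply hs]
    have : ∀ a : Circle2pi, (Prod.mk a ⁻¹' {p : S3 | p.1 = p.2.1}) =
        (({a} : Set Circle2pi) ×ˢ (Set.univ : Set Circle2pi)) := by
      intro a; ext q
      simp only [Set.mem_preimage, Set.mem_setOf_eq, Set.mem_prod, Set.mem_singleton_iff,
        Set.mem_univ, and_true]
      exact eq_comm
    simp_rw [this, Measure.prod_prod, circle_singleton_null, zero_mul, lintegral_zero]
  have h2 : MM {p : S3 | p.2.1 = p.2.2} = 0 := by
    have hd : MeasurableSet {q : Circle2pi × Circle2pi | q.1 = q.2} :=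
      measurableSet_eq_fun measurable_fst measurable_snd
    have hs : MeasurableSet {p : S3 | p.2.1 = p.2.2} := hd.preimage measurable_snd
    rw [Measure.prod_apply hs]
    have key : ∀ a : Circle2pi,
        (circleMeasure.prod circleMeasure) (Prod.mk a ⁻¹' {p : S3 | p.2.1 = p.2.2}) = 0 := by
      intro a
      have : (Prod.mk a ⁻¹' {p : S3 | p.2.1 = p.2.2}) = {q : Circle2pi × Circle2pi | q.1 = q.2} := rfl
      rw [this, Measure.prod_apply hd]
      have : ∀ b : Circle2pi, (Prod.mk b ⁻¹' {q : Circle2pi × Circle2pi | q.1 = q.2}) =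
          ({b} : Set Circle2pi) := by
        intro b; ext c; simp [eq_comm]
      simp_rw [this, circle_singleton_null, lintegral_zero]
    simp_rw [key, lintegral_zero]
  have h3 : MM {p : S3 | p.1 = p.2.2} = 0 := by
    have hs : MeasurableSet {p : S3 | p.1 = p.2.2} :=
      measurableSet_eq_fun measurable_fst (measurable_snd.comp measurable_snd)
    rw [Measure.prod_apply hs]
    have : ∀ a : Circle2pi, (Prod.mk a ⁻¹' {p : S3 | p.1 = p.2.2}) =
        ((Set.univ : Set Circle2pi) ×ˢ ({a} : Set Circle2pi)) := by
      intro a; ext q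
      simp only [Set.mem_preimage, Set.mem_setOf_eq, Set.mem_prod, Set.mem_singleton_iff,
        Set.mem_univ, true_and]
      exact eq_comm
    simp_rw [this, Measure.prod_prod, circle_singleton_null, mul_zero, lintegral_zero]
  rw [ae_iff]
  refine measure_mono_null (fun p hp => ?_)
    (measure_union_null h1 (measure_union_null h2 h3))
  simp only [Set.mem_setOf_eq, not_and_or, not_ne_iff] at hp
  simp only [Set.mem_union, Set.mem_setOf_eq]
  tauto

lemma integrable_bdd {F : S3 → ℝ} (hm : Measurable F) (hb : ∀ p, |F p| ≤ 1) :
    Integrable F MM :=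
  ⟨hm.aestronglyMeasurable,
    HasFiniteIntegral.of_bounded (C := 1) (Filter.Eventually.of_forall fun p => by
      simpa [Real.norm_eq_abs] using hb p)⟩

def ckf (k : ℤ) : Circle2pi → ℝ := fun θ => Real.Angle.cos (k • θ)
def skf (k : ℤ) : Circle2pi → ℝ := fun θ => Real.Angle.sin (k • θ)

lemma cmk_zsmul (k : ℤ) (x : ℝ) : cmk (k • x) = k • cmk x := Real.Angle.coe_zsmul k x

lemma cos_cmk (x : ℝ) : Real.Angle.cos (cmk x) = Real.cos x := Real.Angle.cos_coe x
lemma sin_cmk (x : ℝ) : Real.Angle.sin (cmk x) = Real.sin x := Real.Angle.sin_coe x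

lemma ckf_cmk (k : ℤ) (x : ℝ) : ckf k (cmk x) = Real.cos (k * x) := by
  rw [ckf, ← cmk_zsmul, cos_cmk, zsmul_eq_mul]

lemma skf_cmk (k : ℤ) (x : ℝ) : skf k (cmk x) = Real.sin (k * x) := by
  rw [skf, ← cmk_zsmul, sin_cmk, zsmul_eq_mul]

lemma ckf_neg (k : ℤ) (θ : Circle2pi) : ckf k (-θ) = ckf k θ := by
  show Real.Angle.cos (k • (-θ)) = _
  rw [smul_neg]
  exact Real.Angle.cos_neg _

lemma skf_neg (k : ℤ) (θ : Circle2pi) : skf k (-θ) = -skf k θ := by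
  show Real.Angle.sin (k • (-θ)) = _
  rw [smul_neg]
  exact Real.Angle.sin_neg _

lemma ckf_add (k : ℤ) (θ : Circle2pi) (t : ℝ) :
    ckf k (θ + cmk t) = Real.cos (k*t) * ckf k θ - Real.sin (k*t) * skf k θ := by
  obtain ⟨x, rfl⟩ := cmk_surj θ
  rw [show cmk x + cmk t = cmk (x + t) from rfl, ckf_cmk, ckf_cmk, skf_cmk,
    mul_add, Real.cos_add]
  ring

lemma skf_add (k : ℤ) (θ : Circle2pi) (t : ℝ) :
    skf k (θ + cmk t) = Real.cos (k*t) * skf k θ + Real.sin (k*t) * ckf k θ := by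
  obtain ⟨x, rfl⟩ := cmk_surj θ
  rw [show cmk x + cmk t = cmk (x + t) from rfl, skf_cmk, skf_cmk, ckf_cmk,
    mul_add, Real.sin_add]
  ring

lemma abs_ckf_le (k : ℤ) (θ : Circle2pi) : |ckf k θ| ≤ 1 := by
  obtain ⟨x, rfl⟩ := cmk_surj θ
  rw [ckf_cmk]; exact Real.abs_cos_le_one _

lemma abs_skf_le (k : ℤ) (θ : Circle2pi) : |skf k θ| ≤ 1 := by
  obtain ⟨x, rfl⟩ := cmk_surj θ
  rw [skf_cmk]; exact Real.abs_sin_le_one _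

lemma measurable_ckf (k : ℤ) : Measurable (ckf k) := by
  have h : Continuous (ckf k) := by
    have h1 : Continuous fun θ : Circle2pi => (k • θ : Circle2pi) := continuous_zsmul k
    exact Real.Angle.continuous_cos.comp h1
  exact h.measurable

lemma measurable_skf (k : ℤ) : Measurable (skf k) := by
  have h : Continuous (skf k) := by
    have h1 : Continuous fun θ : Circle2pi => (k • θ : Circle2pi) := continuous_zsmul k
    exact Real.Angle.continuous_sin.comp h1
  exact h.measurable

def II (f g : Circle2pi → ℝ) : ℝ :=
  ∫ p : S3, eCocycle p.1 p.2.1 p.2.2 * f p.2.1 * g p.2.2 ∂MM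

lemma integrable_Efg {f g : Circle2pi → ℝ} (hf : Measurable f) (hg : Measurable g)
    (hbf : ∀ x, |f x| ≤ 1) (hbg : ∀ x, |g x| ≤ 1) :
    Integrable (fun p : S3 => eCocycle p.1 p.2.1 p.2.2 * f p.2.1 * g p.2.2) MM := by
  apply integrable_bdd
  · exact ((measurable_eCocycle3 measurable_fst (measurable_fst.comp measurable_snd)
      (measurable_snd.comp measurable_snd)).mul
      (hf.comp (measurable_fst.comp measurable_snd))).mul
      (hg.comp (measurable_snd.comp measurable_snd))
  · intro p
    have h1 := abs_eCocycle_le p.1 p.2.1 p.2.2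
    have h2 := hbf p.2.1
    have h3 := hbg p.2.2
    have n1 := abs_nonneg (eCocycle p.1 p.2.1 p.2.2)
    have n2 := abs_nonneg (f p.2.1)
    have n3 := abs_nonneg (g p.2.2)
    rw [abs_mul, abs_mul]
    have m1 : |eCocycle p.1 p.2.1 p.2.2| * |f p.2.1| ≤ 1 := by nlinarith
    nlinarith [mul_nonneg n1 n2]

def transEquiv (t : Circle2pi) : S3 ≃ᵐ S3 :=
  (MeasurableEquiv.addRight t).prodCongr
    ((MeasurableEquiv.addRight t).prodCongr (MeasurableEquiv.addRight t))

lemma measurePreserving_translate (t : Circle2pi) :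
    MeasurePreserving (fun p : S3 => (p.1 + t, (p.2.1 + t, p.2.2 + t))) MM MM :=
  (measurePreserving_add_right circleMeasure t).prod
    ((measurePreserving_add_right circleMeasure t).prod
      (measurePreserving_add_right circleMeasure t))

lemma integral_translate (t : Circle2pi) (F : S3 → ℝ) :
    ∫ p, F p ∂MM = ∫ p, F (p.1 + t, (p.2.1 + t, p.2.2 + t)) ∂MM :=
  ((measurePreserving_translate t).integral_comp (transEquiv t).measurableEmbedding F).symm

def negEquiv : S3 ≃ᵐ S3 :=
  (MeasurableEquiv.neg Circle2pi).prodCongr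
    ((MeasurableEquiv.neg Circle2pi).prodCongr (MeasurableEquiv.neg Circle2pi))

lemma measurePreserving_neg3 :
    MeasurePreserving (fun p : S3 => (-p.1, (-p.2.1, -p.2.2))) MM MM :=
  (Measure.measurePreserving_neg circleMeasure).prod
    ((Measure.measurePreserving_neg circleMeasure).prod
      (Measure.measurePreserving_neg circleMeasure))

lemma integral_neg3 (F : S3 → ℝ) :
    ∫ p, F p ∂MM = ∫ p, F (-p.1, (-p.2.1, -p.2.2)) ∂MM :=
  (measurePreserving_neg3.integral_comp negEquiv.measurableEmbedding F).symm

lemma II_neg (f g : Circle2pi → ℝ) :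
    II f g = - II (fun x => f (-x)) (fun x => g (-x)) := by
  rw [II, integral_neg3 (fun p : S3 => eCocycle p.1 p.2.1 p.2.2 * f p.2.1 * g p.2.2)]
  have h2 : ∀ᵐ p : S3 ∂MM,
      eCocycle (-p.1) (-p.2.1) (-p.2.2) * f (-p.2.1) * g (-p.2.2) =
        -(eCocycle p.1 p.2.1 p.2.2 * f (-p.2.1) * g (-p.2.2)) :=
    ae_distinct.mono fun p hp => by rw [eCocycle_neg hp.1 hp.2.1 hp.2.2]; ring
  rw [integral_congr_ae h2, integral_neg]
  rfl

lemma II_translate (f g : Circle2pi → ℝ) (t : Circle2pi) :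
    II f g = ∫ p : S3, eCocycle p.1 p.2.1 p.2.2 * f (p.2.1 + t) * g (p.2.2 + t) ∂MM := by
  rw [II, integral_translate t (fun p : S3 => eCocycle p.1 p.2.1 p.2.2 * f p.2.1 * g p.2.2)]
  exact integral_congr_ae (Filter.Eventually.of_forall fun p => by
    show eCocycle (p.1 + t) (p.2.1 + t) (p.2.2 + t) * f (p.2.1 + t) * g (p.2.2 + t) = _
    rw [eCocycle_translate])

lemma integral_comb (c₁ c₂ c₃ c₄ : ℝ) (h₁ h₂ h₃ h₄ : S3 → ℝ)
    (i₁ : Integrable h₁ MM) (i₂ : Integrable h₂ MM) (i₃ : Integrable h₃ MM)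
    (i₄ : Integrable h₄ MM) :
    ∫ p, (c₁ * h₁ p + c₂ * h₂ p + c₃ * h₃ p + c₄ * h₄ p) ∂MM =
      c₁ * ∫ p, h₁ p ∂MM + c₂ * ∫ p, h₂ p ∂MM + c₃ * ∫ p, h₃ p ∂MM +
        c₄ * ∫ p, h₄ p ∂MM := by
  have e1 : ∫ p, (c₁ * h₁ p + c₂ * h₂ p + c₃ * h₃ p + c₄ * h₄ p) ∂MM =
      (∫ p, (c₁ * h₁ p + c₂ * h₂ p + c₃ * h₃ p) ∂MM) + ∫ p, c₄ * h₄ p ∂MM :=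
    integral_add (((i₁.const_mul c₁).add (i₂.const_mul c₂)).add (i₃.const_mul c₃))
      (i₄.const_mul c₄)
  have e2 : ∫ p, (c₁ * h₁ p + c₂ * h₂ p + c₃ * h₃ p) ∂MM =
      (∫ p, (c₁ * h₁ p + c₂ * h₂ p) ∂MM) + ∫ p, c₃ * h₃ p ∂MM :=
    integral_add ((i₁.const_mul c₁).add (i₂.const_mul c₂)) (i₃.const_mul c₃)
  have e3 : ∫ p, (c₁ * h₁ p + c₂ * h₂ p) ∂MM =
      (∫ p, c₁ * h₁ p ∂MM) + ∫ p, c₂ * h₂ p ∂MM :=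
    integral_add (i₁.const_mul c₁) (i₂.const_mul c₂)
  rw [e1, e2, e3, integral_const_mul, integral_const_mul, integral_const_mul,
    integral_const_mul]

lemma II_rot_cs (k l : ℤ) (t : ℝ) :
    II (ckf k) (skf l) =
      (Real.cos ((k:ℝ)*t) * Real.cos ((l:ℝ)*t)) * II (ckf k) (skf l)
      + (Real.cos ((k:ℝ)*t) * Real.sin ((l:ℝ)*t)) * II (ckf k) (ckf l)
      + (-(Real.sin ((k:ℝ)*t) * Real.cos ((l:ℝ)*t))) * II (skf k) (skf l)
      + (-(Real.sin ((k:ℝ)*t) * Real.sin ((l:ℝ)*t))) * II (skf k) (ckf l) := by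
  have h := II_translate (ckf k) (skf l) (cmk t)
  have hptw : ∀ p : S3,
      eCocycle p.1 p.2.1 p.2.2 * ckf k (p.2.1 + cmk t) * skf l (p.2.2 + cmk t) =
        (Real.cos ((k:ℝ)*t) * Real.cos ((l:ℝ)*t)) *
          (eCocycle p.1 p.2.1 p.2.2 * ckf k p.2.1 * skf l p.2.2)
        + (Real.cos ((k:ℝ)*t) * Real.sin ((l:ℝ)*t)) *
          (eCocycle p.1 p.2.1 p.2.2 * ckf k p.2.1 * ckf l p.2.2)
        + (-(Real.sin ((k:ℝ)*t) * Real.cos ((l:ℝ)*t))) *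
          (eCocycle p.1 p.2.1 p.2.2 * skf k p.2.1 * skf l p.2.2)
        + (-(Real.sin ((k:ℝ)*t) * Real.sin ((l:ℝ)*t))) *
          (eCocycle p.1 p.2.1 p.2.2 * skf k p.2.1 * ckf l p.2.2) := by
    intro p; rw [ckf_add, skf_add]; ring
  refine h.trans ((integral_congr_ae (Filter.Eventually.of_forall hptw)).trans ?_)
  exact integral_comb _ _ _ _ _ _ _ _
    (integrable_Efg (measurable_ckf k) (measurable_skf l) (abs_ckf_le k) (abs_skf_le l))
    (integrable_Efg (measurable_ckf k) (measurable_ckf l) (abs_ckf_le k) (abs_ckf_le l))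
    (integrable_Efg (measurable_skf k) (measurable_skf l) (abs_skf_le k) (abs_skf_le l))
    (integrable_Efg (measurable_skf k) (measurable_ckf l) (abs_skf_le k) (abs_ckf_le l))

lemma II_rot_sc (k l : ℤ) (t : ℝ) :
    II (skf k) (ckf l) =
      (Real.cos ((k:ℝ)*t) * Real.cos ((l:ℝ)*t)) * II (skf k) (ckf l)
      + (-(Real.cos ((k:ℝ)*t) * Real.sin ((l:ℝ)*t))) * II (skf k) (skf l)
      + (Real.sin ((k:ℝ)*t) * Real.cos ((l:ℝ)*t)) * II (ckf k) (ckf l)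
      + (-(Real.sin ((k:ℝ)*t) * Real.sin ((l:ℝ)*t))) * II (ckf k) (skf l) := by
  have h := II_translate (skf k) (ckf l) (cmk t)
  have hptw : ∀ p : S3,
      eCocycle p.1 p.2.1 p.2.2 * skf k (p.2.1 + cmk t) * ckf l (p.2.2 + cmk t) =
        (Real.cos ((k:ℝ)*t) * Real.cos ((l:ℝ)*t)) *
          (eCocycle p.1 p.2.1 p.2.2 * skf k p.2.1 * ckf l p.2.2)
        + (-(Real.cos ((k:ℝ)*t) * Real.sin ((l:ℝ)*t))) *
          (eCocycle p.1 p.2.1 p.2.2 * skf k p.2.1 * skf l p.2.2)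
        + (Real.sin ((k:ℝ)*t) * Real.cos ((l:ℝ)*t)) *
          (eCocycle p.1 p.2.1 p.2.2 * ckf k p.2.1 * ckf l p.2.2)
        + (-(Real.sin ((k:ℝ)*t) * Real.sin ((l:ℝ)*t))) *
          (eCocycle p.1 p.2.1 p.2.2 * ckf k p.2.1 * skf l p.2.2) := by
    intro p; rw [skf_add, ckf_add]; ring
  refine h.trans ((integral_congr_ae (Filter.Eventually.of_forall hptw)).trans ?_)
  exact integral_comb _ _ _ _ _ _ _ _
    (integrable_Efg (measurable_skf k) (measurable_ckf l) (abs_skf_le k) (abs_ckf_le l))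
    (integrable_Efg (measurable_skf k) (measurable_skf l) (abs_skf_le k) (abs_skf_le l))
    (integrable_Efg (measurable_ckf k) (measurable_ckf l) (abs_ckf_le k) (abs_ckf_le l))
    (integrable_Efg (measurable_ckf k) (measurable_skf l) (abs_ckf_le k) (abs_skf_le l))

lemma II_cc_zero (k l : ℤ) : II (ckf k) (ckf l) = 0 := by
  have h := II_neg (ckf k) (ckf l)
  have h2 : II (fun x => ckf k (-x)) (fun x => ckf l (-x)) = II (ckf k) (ckf l) := by
    unfold II; congr 1; funext p; simp only [ckf_neg]
  rw [h2] at h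
  linarith

lemma II_ss_zero (k l : ℤ) : II (skf k) (skf l) = 0 := by
  have h := II_neg (skf k) (skf l)
  have h2 : II (fun x => skf k (-x)) (fun x => skf l (-x)) = II (skf k) (skf l) := by
    unfold II; congr 1; funext p; simp only [skf_neg]; ring
  rw [h2] at h
  linarith

lemma II_cs_zero (k l : ℤ) (hk : 0 < k) (hl : 0 < l) (hne : k ≠ l) :
    II (ckf k) (skf l) = 0 := by
  have hcc := II_cc_zero k l
  have hss := II_ss_zero k l
  set x := II (ckf k) (skf l) with hx
  set y := II (skf k) (ckf l) with hy
  have hrot1 : ∀ t : ℝ, x = (Real.cos ((k:ℝ)*t) * Real.cos ((l:ℝ)*t)) * x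
      - (Real.sin ((k:ℝ)*t) * Real.sin ((l:ℝ)*t)) * y := by
    intro t
    have h := II_rot_cs k l t
    rw [hcc, hss] at h
    linear_combination h
  have hrot2 : ∀ t : ℝ, y = (Real.cos ((k:ℝ)*t) * Real.cos ((l:ℝ)*t)) * y
      - (Real.sin ((k:ℝ)*t) * Real.sin ((l:ℝ)*t)) * x := by
    intro t
    have h := II_rot_sc k l t
    rw [hcc, hss] at h
    linear_combination h
  have hk' : (0:ℝ) < (k:ℝ) := by exact_mod_cast hk
  have hl' : (0:ℝ) < (l:ℝ) := by exact_mod_cast hl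
  set t₁ := π / ((k:ℝ) + (l:ℝ)) with ht₁
  have hkl : (k:ℝ) + (l:ℝ) ≠ 0 := by positivity
  have hsum0 : (k:ℝ)*t₁ + (l:ℝ)*t₁ = π := by
    rw [ht₁]; field_simp
  have e1 : Real.cos ((k:ℝ)*t₁) * Real.cos ((l:ℝ)*t₁)
      - Real.sin ((k:ℝ)*t₁) * Real.sin ((l:ℝ)*t₁) = -1 := by
    rw [← Real.cos_add, hsum0, Real.cos_pi]
  have hsum : x + y = -(x + y) := by
    linear_combination (hrot1 t₁) + (hrot2 t₁) + (x + y) * e1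
  set t₂ := π / ((k:ℝ) - (l:ℝ)) with ht₂
  have hkl2 : (k:ℝ) - (l:ℝ) ≠ 0 := sub_ne_zero.mpr (by exact_mod_cast hne)
  have hdiff0 : (k:ℝ)*t₂ - (l:ℝ)*t₂ = π := by
    rw [ht₂]; field_simp
  have e2 : Real.cos ((k:ℝ)*t₂) * Real.cos ((l:ℝ)*t₂)
      + Real.sin ((k:ℝ)*t₂) * Real.sin ((l:ℝ)*t₂) = -1 := by
    rw [← Real.cos_sub, hdiff0, Real.cos_pi]
  have hdiff : x - y = -(x - y) := by
    linear_combination (hrot1 t₂) - (hrot2 t₂) + (x - y) * e2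
  linarith


/-- orthogonality relations of `e` against trigonometric functions. -/
theorem euler_trig_orthogonality (k l : ℤ) (hk : 0 < k) (hl : 0 < l) :
    (∫ p : Circle2pi × Circle2pi × Circle2pi,
        eCocycle p.1 p.2.1 p.2.2 * Real.Angle.cos (k • p.2.1) * Real.Angle.cos (l • p.2.2)
      ∂(circleMeasure.prod (circleMeasure.prod circleMeasure)) = 0) ∧
    (∫ p : Circle2pi × Circle2pi × Circle2pi,
        eCocycle p.1 p.2.1 p.2.2 * Real.Angle.sin (k • p.2.1) * Real.Angle.sin (l • p.2.2)
      ∂(circleMeasure.prod (circleMeasure.prod circleMeasure)) = 0) ∧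
    (k ≠ l →
      ∫ p : Circle2pi × Circle2pi × Circle2pi,
          eCocycle p.1 p.2.1 p.2.2 * Real.Angle.cos (k • p.2.1) * Real.Angle.sin (l • p.2.2)
        ∂(circleMeasure.prod (circleMeasure.prod circleMeasure)) = 0) := by
  exact ⟨II_cc_zero k l, II_ss_zero k l, fun hne => II_cs_zero k l hk hl hne⟩
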